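/- Let s > 0, S > 0 and 0 ≤ y < s be real numbers, and let ℒ = {k·(S/s, y) + n·(0, s) : k, n ∈ ℤ} ⊆ ℝ². Let H = {(y₁, y₂) ∈ ℝ² : y₂ > 0, or (y₂ = 0 and y₁ > 0)}. Then for every T > 0 the set {v ∈ ℒ ∩ H : ‖v‖ ≤ T} is finite and its cardinality is at most πT²/(2S) + 2sT/S + T/s. -/

import Mathlib

open intervalIntegral Real

lemma int_quarter : ∫ x in (0:ℝ)..1, Real.sqrt (1 - x ^ 2) = π / 4 := by
  have h := integral_sqrt_one_sub_sq
  have h2 := intervalIntegral.integral_comp_neg (a := (0:ℝ)) (b := 1) (fun x => Real.sqrt (1 - x ^ 2))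
  simp only [neg_sq, neg_zero] at h2
  have h3 : ∫ x in (-1:ℝ)..1, Real.sqrt (1-x^2) = (∫ x in (-1:ℝ)..0, Real.sqrt (1-x^2)) + ∫ x in (0:ℝ)..1, Real.sqrt (1-x^2) := by
    rw [intervalIntegral.integral_add_adjacent_intervals] <;>
    · apply Continuous.intervalIntegrable; continuity
  rw [h3, ← h2] at h; linarith

lemma int_scaled {T : ℝ} (hT : 0 < T) : ∫ x in (0:ℝ)..T, Real.sqrt (T ^ 2 - x ^ 2) = π * T ^ 2 / 4 := by
  have key : ∀ x : ℝ, Real.sqrt (T ^ 2 - x ^ 2) = T * Real.sqrt (1 - (x / T) ^ 2) := by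
    intro x
    rw [← Real.sqrt_sq hT.le, ← Real.sqrt_mul (by positivity)]
    congr 1
    field_simp
    rw [Real.sq_sqrt (sq_nonneg T)]
  simp_rw [key]
  rw [intervalIntegral.integral_const_mul]
  have h2 := intervalIntegral.integral_comp_div (a := (0:ℝ)) (b := T) (c := T)
    (f := fun u => Real.sqrt (1 - u ^ 2)) (ne_of_gt hT)
  rw [h2]
  simp only [zero_div, div_self (ne_of_gt hT), int_quarter, smul_eq_mul]
  ring

lemma sum_sqrt_le {T δ : ℝ} (hT : 0 < T) (hδ : 0 < δ) (K : ℕ) (hK : (K : ℝ) * δ ≤ T) :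
    ∑ k ∈ Finset.range K, Real.sqrt (T ^ 2 - (((k : ℝ) + 1) * δ) ^ 2) * δ ≤ π * T ^ 2 / 4 := by
  set f : ℝ → ℝ := fun x => Real.sqrt (T ^ 2 - x ^ 2) with hf
  have hcont : Continuous f := by
    apply Real.continuous_sqrt.comp; continuity
  have hint : ∀ a b : ℝ, IntervalIntegrable f MeasureTheory.volume a b :=
    fun a b => hcont.intervalIntegrable a b
  have hanti : ∀ a b : ℝ, 0 ≤ a → a ≤ b → f b ≤ f a := by
    intro a b ha hab
    apply Real.sqrt_le_sqrt
    nlinarith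
  have hterm : ∀ k ∈ Finset.range K,
      f (((k : ℝ) + 1) * δ) * δ ≤ ∫ x in ((k : ℝ) * δ)..(((k : ℝ) + 1) * δ), f x := by
    intro k _
    have h1 : (k : ℝ) * δ ≤ ((k : ℝ) + 1) * δ := by nlinarith [hδ.le]
    have := intervalIntegral.integral_mono_on (μ := MeasureTheory.volume)
      (f := fun _ => f (((k : ℝ) + 1) * δ)) (g := f) h1
      (intervalIntegrable_const) (hint _ _)
      (fun x hx => hanti x (((k : ℝ) + 1) * δ) (le_trans (by positivity) hx.1) hx.2)
    have heq : (((k:ℝ)+1)*δ - (k:ℝ)*δ) = δ := by ring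
    rw [intervalIntegral.integral_const, heq, smul_eq_mul] at this
    linarith [this]
  calc ∑ k ∈ Finset.range K, f (((k : ℝ) + 1) * δ) * δ
      ≤ ∑ k ∈ Finset.range K, ∫ x in ((k : ℝ) * δ)..(((k : ℝ) + 1) * δ), f x :=
        Finset.sum_le_sum hterm
    _ = ∫ x in (0 : ℝ)..((K : ℝ) * δ), f x := by
        have := intervalIntegral.sum_integral_adjacent_intervals
          (a := fun k : ℕ => (k : ℝ) * δ) (n := K) (f := f) (fun k _ => hint _ _)
        simpa [Nat.cast_add] using this
    _ ≤ ∫ x in (0 : ℝ)..T, f x := by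
        apply intervalIntegral.integral_mono_interval (le_refl (0:ℝ)) (by positivity) hK
        · filter_upwards with x using Real.sqrt_nonneg _
        · exact hint _ _
    _ = π * T ^ 2 / 4 := int_scaled hT

set_option maxHeartbeats 1600000

/-- The central counting estimate in the proof of Lemma 5.2: for the lattice
`ℒ` generated by `(0, s)` and `(S/s, y)` (with `0 ≤ y < s`) and the standard
half-plane `H`, the number of lattice points in `H` of norm at most `T` is at
most `πT²/(2S) + 2sT/S + T/s`. -/
theorem lattice_halfplane_count
    (s S y : ℝ) (hs : 0 < s) (hS : 0 < S) (hy0 : 0 ≤ y) (hys : y < s)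
    (u₁ u₂ : EuclideanSpace ℝ (Fin 2))
    (hu₁ : u₁ = (WithLp.equiv 2 (Fin 2 → ℝ)).symm ![S / s, y])
    (hu₂ : u₂ = (WithLp.equiv 2 (Fin 2 → ℝ)).symm ![0, s])
    (T : ℝ) (hT : 0 < T) :
    {v : EuclideanSpace ℝ (Fin 2) |
        (∃ k n : ℤ, v = k • u₁ + n • u₂) ∧
        (0 < v 1 ∨ (v 1 = 0 ∧ 0 < v 0)) ∧ ‖v‖ ≤ T}.Finite ∧
    ({v : EuclideanSpace ℝ (Fin 2) |
        (∃ k n : ℤ, v = k • u₁ + n • u₂) ∧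
        (0 < v 1 ∨ (v 1 = 0 ∧ 0 < v 0)) ∧ ‖v‖ ≤ T}.ncard : ℝ)
      ≤ Real.pi * T ^ 2 / (2 * S) + 2 * s * T / S + T / s := by
  have hδ : 0 < S / s := div_pos hS hs
  set δ : ℝ := S / s with hδdef
  -- coordinates of lattice vectors
  have hc0 : ∀ k n : ℤ, ((k • u₁ + n • u₂ : EuclideanSpace ℝ (Fin 2)) 0) = (k : ℝ) * δ := by
    intro k n; subst hu₁ hu₂
    simp [PiLp.add_apply, PiLp.smul_apply, WithLp.equiv_symm_apply, PiLp.toLp_apply]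
  have hc1 : ∀ k n : ℤ, ((k • u₁ + n • u₂ : EuclideanSpace ℝ (Fin 2)) 1) = (k : ℝ) * y + (n : ℝ) * s := by
    intro k n; subst hu₁ hu₂
    simp [PiLp.add_apply, PiLp.smul_apply, WithLp.equiv_symm_apply, PiLp.toLp_apply]
  have hnormsq : ∀ v : EuclideanSpace ℝ (Fin 2), ‖v‖ = Real.sqrt ((v 0)^2 + (v 1)^2) := by
    intro v; rw [EuclideanSpace.norm_eq]; simp [Fin.sum_univ_two, sq_abs]
  have hnorm : ∀ v : EuclideanSpace ℝ (Fin 2), (‖v‖ ≤ T ↔ (v 0)^2 + (v 1)^2 ≤ T^2) := by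
    intro v
    rw [hnormsq]
    constructor
    · intro h
      have h2 := Real.sq_sqrt (by positivity : (0:ℝ) ≤ (v 0)^2 + (v 1)^2)
      nlinarith [Real.sqrt_nonneg ((v 0)^2 + (v 1)^2)]
    · intro h
      calc Real.sqrt ((v 0)^2 + (v 1)^2) ≤ Real.sqrt (T^2) := Real.sqrt_le_sqrt h
        _ = T := Real.sqrt_sq hT.le
  set V : ℤ × ℤ → EuclideanSpace ℝ (Fin 2) := fun p => p.1 • u₁ + p.2 • u₂ with hV
  set A : Set (ℤ × ℤ) := {p | (0 < (p.1 : ℝ) * y + (p.2 : ℝ) * s ∨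
      ((p.1 : ℝ) * y + (p.2 : ℝ) * s = 0 ∧ 0 < (p.1 : ℝ) * δ)) ∧
      ((p.1 : ℝ) * δ)^2 + ((p.1 : ℝ) * y + (p.2 : ℝ) * s)^2 ≤ T^2} with hA
  have himg : {v : EuclideanSpace ℝ (Fin 2) |
        (∃ k n : ℤ, v = k • u₁ + n • u₂) ∧
        (0 < v 1 ∨ (v 1 = 0 ∧ 0 < v 0)) ∧ ‖v‖ ≤ T} = V '' A := by
    ext v
    simp only [Set.mem_setOf_eq, Set.mem_image]
    constructor
    · rintro ⟨⟨k, n, rfl⟩, hH, hN⟩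
      refine ⟨(k, n), ⟨?_, ?_⟩, rfl⟩
      · rw [hc0 k n, hc1 k n] at hH; exact hH
      · rw [hnorm _, hc0 k n, hc1 k n] at hN; exact hN
    · rintro ⟨⟨k, n⟩, ⟨hH, hN⟩, rfl⟩
      refine ⟨⟨k, n, rfl⟩, ?_, ?_⟩
      · rw [hV]; simp only []
        rw [hc0 k n, hc1 k n]; exact hH
      · rw [hV]; simp only []
        rw [hnorm _, hc0 k n, hc1 k n]; exact hN
  have hVinj : Function.Injective V := by
    intro p q h
    have h0 : (p.1 : ℝ) * δ = (q.1 : ℝ) * δ := by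
      have h' := congrFun (congrArg (fun (w : EuclideanSpace ℝ (Fin 2)) (i : Fin 2) => w i) h) 0
      simp only [hV] at h'
      rwa [hc0 p.1 p.2, hc0 q.1 q.2] at h'
    have hp1 : p.1 = q.1 := by
      have := mul_right_cancel₀ (ne_of_gt hδ) h0
      exact_mod_cast this
    have h1 : (p.1 : ℝ) * y + (p.2 : ℝ) * s = (q.1 : ℝ) * y + (q.2 : ℝ) * s := by
      have h' := congrFun (congrArg (fun (w : EuclideanSpace ℝ (Fin 2)) (i : Fin 2) => w i) h) 1
      simp only [hV] at h'
      rwa [hc1 p.1 p.2, hc1 q.1 q.2] at h'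
    have hp2 : p.2 = q.2 := by
      rw [hp1] at h1
      have h2 : (p.2 : ℝ) * s = (q.2 : ℝ) * s := by linarith
      have := mul_right_cancel₀ (ne_of_gt hs) h2
      exact_mod_cast this
    exact Prod.ext hp1 hp2
  set K : ℤ := ⌊T * s / S⌋ with hKdef
  have hK0 : 0 ≤ K := Int.le_floor.2 (by push_cast; positivity)
  have hKle : (K : ℝ) ≤ T * s / S := Int.floor_le _
  have hbound1 : ∀ p ∈ A, -K ≤ p.1 ∧ p.1 ≤ K := by
    intro p hp
    obtain ⟨-, hp2⟩ := hp
    have hsq : ((p.1 : ℝ) * δ)^2 ≤ T^2 := by nlinarith [sq_nonneg ((p.1:ℝ)*y + (p.2:ℝ)*s)]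
    have habs : |(p.1 : ℝ)| * δ ≤ T := by
      have := Real.sqrt_le_sqrt hsq
      rw [Real.sqrt_sq_eq_abs, Real.sqrt_sq hT.le, abs_mul, abs_of_pos hδ] at this
      exact this
    have habs2 : |(p.1 : ℝ)| ≤ T * s / S := by
      rw [le_div_iff₀ hS]
      calc |(p.1:ℝ)| * S = (|(p.1:ℝ)| * δ) * s := by rw [hδdef]; field_simp
        _ ≤ T * s := by nlinarith [hs.le]
    have : |p.1| ≤ K := by
      rw [hKdef]
      apply Int.le_floor.2
      rwa [Int.cast_abs]
    exact abs_le.mp this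
  set N : ℤ := ⌊(T + (K : ℝ) * s) / s⌋ with hNdef
  have hbound2 : ∀ p ∈ A, -N ≤ p.2 ∧ p.2 ≤ N := by
    intro p hp
    have hb1 := hbound1 p hp
    obtain ⟨-, hp2⟩ := hp
    have hsq : ((p.1 : ℝ) * y + (p.2 : ℝ) * s)^2 ≤ T^2 := by
      nlinarith [sq_nonneg ((p.1:ℝ)*δ)]
    have habs : |(p.1 : ℝ) * y + (p.2 : ℝ) * s| ≤ T := by
      have := Real.sqrt_le_sqrt hsq
      rwa [Real.sqrt_sq_eq_abs, Real.sqrt_sq hT.le] at this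
    have hKcast : |(p.1 : ℝ)| ≤ (K : ℝ) := by
      have h' : |p.1| ≤ K := abs_le.mpr hb1
      exact_mod_cast h'
    have hky : |(p.1 : ℝ) * y| ≤ (K : ℝ) * s := by
      rw [abs_mul, abs_of_nonneg hy0]
      have hKR : (0:ℝ) ≤ (K : ℝ) := by exact_mod_cast hK0
      nlinarith [abs_nonneg ((p.1:ℝ))]
    have h2abs : |(p.2 : ℝ)| * s ≤ T + (K : ℝ) * s := by
      have h3 : |(p.2 : ℝ) * s| ≤ T + (K : ℝ) * s := by
        have := abs_sub_abs_le_abs_sub ((p.1:ℝ)*y + (p.2:ℝ)*s) ((p.1:ℝ)*y)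
        have h4 : |(p.2:ℝ)*s| - |(p.1:ℝ)*y| ≤ |(p.1:ℝ)*y + (p.2:ℝ)*s| := by
          have := abs_add_le ((p.1:ℝ)*y + (p.2:ℝ)*s) (-((p.1:ℝ)*y))
          simp only [abs_neg] at this
          have heq : (p.1:ℝ)*y + (p.2:ℝ)*s + -((p.1:ℝ)*y) = (p.2:ℝ)*s := by ring
          rw [heq] at this
          linarith
        linarith
      rwa [abs_mul, abs_of_pos hs] at h3
    have h2le : |(p.2 : ℝ)| ≤ (T + (K : ℝ) * s) / s := by
      rw [le_div_iff₀ hs]; exact h2abs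
    have : |p.2| ≤ N := by
      rw [hNdef]
      apply Int.le_floor.2
      rwa [Int.cast_abs]
    exact abs_le.mp this
  have hAsub : A ⊆ Set.Icc (⟨-K, -N⟩ : ℤ × ℤ) ⟨K, N⟩ := by
    intro p hp
    have h1 := hbound1 p hp
    have h2 := hbound2 p hp
    exact ⟨⟨h1.1, h2.1⟩, h1.2, h2.2⟩
  have hAfin : A.Finite := (Set.finite_Icc _ _).subset hAsub
  rw [himg]
  refine ⟨hAfin.image V, ?_⟩
  rw [Set.ncard_image_of_injOn (Function.Injective.injOn hVinj),
    Set.ncard_eq_toFinset_card A hAfin]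
  set R : ℤ → ℝ := fun k => Real.sqrt (T^2 - ((k:ℝ)*δ)^2) with hR
  have hRnn : ∀ k, 0 ≤ R k := fun k => Real.sqrt_nonneg _
  set F : Finset (ℤ × ℤ) := hAfin.toFinset with hF
  have hmemA : ∀ p ∈ F, p ∈ A := fun p hp => hAfin.mem_toFinset.1 hp
  have hcard : F.card = ∑ k ∈ Finset.Icc (-K) K, (F.filter (fun p => p.1 = k)).card :=
    Finset.card_eq_sum_card_fiberwise
      (fun p hp => Finset.mem_Icc.2 (hbound1 p (hmemA p hp)))
  -- fiber bound for k ≠ 0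
  have hfiber : ∀ k : ℤ, k ≠ 0 → ((F.filter (fun p => p.1 = k)).card : ℝ) ≤ R k / s + 1 := by
    intro k hk
    have hsub : (F.filter (fun p => p.1 = k)).card
        ≤ (Finset.Icc ⌈(-((k:ℝ)*y))/s⌉ ⌊(R k - (k:ℝ)*y)/s⌋).card := by
      apply Finset.card_le_card_of_injOn (fun p => p.2)
      · intro p hp
        rw [Finset.mem_coe, Finset.mem_filter] at hp
        rw [Finset.mem_coe]
        obtain ⟨hpF, hpk⟩ := hp
        obtain ⟨hH, hN⟩ := hmemA p hpF
        rw [hpk] at hH hN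
        have hw0 : 0 ≤ (k:ℝ)*y + (p.2:ℝ)*s := by
          rcases hH with h | ⟨h, -⟩
          · exact h.le
          · exact le_of_eq h.symm
        have hwsq : ((k:ℝ)*y + (p.2:ℝ)*s)^2 ≤ T^2 - ((k:ℝ)*δ)^2 := by linarith
        have hwle : (k:ℝ)*y + (p.2:ℝ)*s ≤ R k := by
          rw [hR]
          calc (k:ℝ)*y + (p.2:ℝ)*s = Real.sqrt (((k:ℝ)*y + (p.2:ℝ)*s)^2) :=
                (Real.sqrt_sq hw0).symm
            _ ≤ Real.sqrt (T^2 - ((k:ℝ)*δ)^2) := Real.sqrt_le_sqrt hwsq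
        refine Finset.mem_Icc.2 ⟨Int.ceil_le.2 ?_, Int.le_floor.2 ?_⟩
        · rw [div_le_iff₀ hs]; linarith
        · rw [le_div_iff₀ hs]; linarith
      · intro p hp q hq hpq
        rw [Finset.mem_coe, Finset.mem_filter] at hp hq
        exact Prod.ext (hp.2.trans hq.2.symm) hpq
    have hIcc : ((Finset.Icc ⌈(-((k:ℝ)*y))/s⌉ ⌊(R k - (k:ℝ)*y)/s⌋).card : ℝ) ≤ R k / s + 1 := by
      rw [Int.card_Icc]
      set a : ℤ := ⌈(-((k:ℝ)*y))/s⌉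
      set b : ℤ := ⌊(R k - (k:ℝ)*y)/s⌋
      rcases le_or_gt (b + 1 - a) 0 with h | h
      · rw [Int.toNat_of_nonpos h]
        simp only [Nat.cast_zero]
        have := hRnn k
        positivity
      · have hcast : (((b + 1 - a).toNat : ℕ) : ℝ) = ((b : ℝ) + 1 - (a : ℝ)) := by
          have h' : ((b + 1 - a).toNat : ℤ) = b + 1 - a := Int.toNat_of_nonneg h.le
          have h'' : (((b + 1 - a).toNat : ℤ) : ℝ) = ((b:ℝ) + 1 - (a:ℝ)) := by
            rw [h']; push_cast; ring
          exact_mod_cast h''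
        rw [hcast]
        have hfl : (b : ℝ) ≤ (R k - (k:ℝ)*y)/s := Int.floor_le _
        have hcl : (-((k:ℝ)*y))/s ≤ (a : ℝ) := Int.le_ceil _
        have hring : (R k - (k:ℝ)*y)/s - (-((k:ℝ)*y))/s = R k / s := by ring
        linarith
    calc ((F.filter (fun p => p.1 = k)).card : ℝ)
        ≤ ((Finset.Icc ⌈(-((k:ℝ)*y))/s⌉ ⌊(R k - (k:ℝ)*y)/s⌋).card : ℝ) := by
          exact_mod_cast hsub
      _ ≤ R k / s + 1 := hIcc
  -- fiber bound for k = 0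
  have hfiber0 : ((F.filter (fun p => p.1 = (0:ℤ))).card : ℝ) ≤ T / s := by
    have hsub : (F.filter (fun p => p.1 = (0:ℤ))).card ≤ (Finset.Icc (1:ℤ) ⌊T/s⌋).card := by
      apply Finset.card_le_card_of_injOn (fun p => p.2)
      · intro p hp
        rw [Finset.mem_coe, Finset.mem_filter] at hp
        rw [Finset.mem_coe]
        obtain ⟨hpF, hpk⟩ := hp
        obtain ⟨hH, hN⟩ := hmemA p hpF
        rw [hpk] at hH hN
        push_cast at hH hN
        simp only [zero_mul, zero_add, mul_zero] at hH hN
        have hpos : 0 < (p.2:ℝ)*s := by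
          rcases hH with h | ⟨-, h⟩
          · exact h
          · exact absurd h (lt_irrefl 0)
        have h1 : (0:ℝ) < (p.2:ℝ) := by
          by_contra hcon
          push_neg at hcon
          nlinarith
        have h2 : (1:ℤ) ≤ p.2 := by exact_mod_cast h1
        have h3 : (p.2:ℝ)*s ≤ T := by nlinarith [sq_nonneg ((p.2:ℝ)*s)]
        refine Finset.mem_Icc.2 ⟨h2, Int.le_floor.2 ?_⟩
        rw [le_div_iff₀ hs]
        exact h3
      · intro p hp q hq hpq
        rw [Finset.mem_coe, Finset.mem_filter] at hp hq
        exact Prod.ext (hp.2.trans hq.2.symm) hpq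
    have hIcc : ((Finset.Icc (1:ℤ) ⌊T/s⌋).card : ℝ) ≤ T / s := by
      rw [Int.card_Icc]
      have hfl0 : (0:ℤ) ≤ ⌊T/s⌋ := Int.le_floor.2 (by push_cast; positivity)
      have hcast : (((⌊T/s⌋ + 1 - 1).toNat : ℕ) : ℝ) = ((⌊T/s⌋ : ℝ)) := by
        have h' : ((⌊T/s⌋ + 1 - 1).toNat : ℤ) = ⌊T/s⌋ := by omega
        exact_mod_cast congrArg (fun z : ℤ => (z : ℝ)) h'
      rw [hcast]
      exact Int.floor_le _
    calc ((F.filter (fun p => p.1 = (0:ℤ))).card : ℝ)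
        ≤ ((Finset.Icc (1:ℤ) ⌊T/s⌋).card : ℝ) := by exact_mod_cast hsub
      _ ≤ T / s := hIcc
  -- assemble
  have h0mem : (0:ℤ) ∈ Finset.Icc (-K) K := Finset.mem_Icc.2 ⟨by omega, hK0⟩
  set E : Finset ℤ := (Finset.Icc (-K) K).erase 0 with hE
  have hsplit : ((F.card : ℝ))
      = ((F.filter (fun p => p.1 = (0:ℤ))).card : ℝ)
        + ∑ k ∈ E, ((F.filter (fun p => p.1 = k)).card : ℝ) := by
    rw [hcard]
    push_cast
    rw [← Finset.add_sum_erase _ _ h0mem]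
  have hEsum : ∑ k ∈ E, ((F.filter (fun p => p.1 = k)).card : ℝ)
      ≤ ∑ k ∈ E, (R k / s + 1) :=
    Finset.sum_le_sum (fun k hk => hfiber k (Finset.ne_of_mem_erase hk))
  have hcardE : ((E.card : ℕ) : ℝ) ≤ 2 * (T*s/S) := by
    have h1 : E.card = (2*K).toNat := by
      rw [hE, Finset.card_erase_of_mem h0mem, Int.card_Icc]
      omega
    rw [h1]
    have h2 : (((2*K).toNat : ℕ) : ℝ) = 2*(K:ℝ) := by
      have h' : ((2*K).toNat : ℤ) = 2*K := Int.toNat_of_nonneg (by omega)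
      have h'' : (((2*K).toNat : ℤ) : ℝ) = 2*(K:ℝ) := by rw [h']; push_cast; ring
      exact_mod_cast h''
    rw [h2]
    linarith
  have hEsplit2 : E = Finset.Icc (-K) (-1) ∪ Finset.Icc 1 K := by
    ext a
    simp only [hE, Finset.mem_erase, Finset.mem_Icc, Finset.mem_union]
    omega
  have hdisj : Disjoint (Finset.Icc (-K) (-1)) (Finset.Icc (1:ℤ) K) := by
    rw [Finset.disjoint_left]
    intro a ha hb
    rw [Finset.mem_Icc] at ha hb
    omega
  have hneg : ∑ k ∈ Finset.Icc (-K) (-1), R k = ∑ k ∈ Finset.Icc (1:ℤ) K, R k := by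
    apply Finset.sum_nbij' (i := fun k : ℤ => -k) (j := fun k : ℤ => -k)
    · intro a ha; rw [Finset.mem_Icc] at *; omega
    · intro a ha; rw [Finset.mem_Icc] at *; omega
    · intro a _; ring
    · intro a _; ring
    · intro a _
      rw [hR]
      push_cast
      ring_nf
  have hpos_le : ∑ k ∈ Finset.Icc (1:ℤ) K, R k ≤ π * T^2 / 4 / δ := by
    have hKn : ((K.toNat : ℕ) : ℝ) * δ ≤ T := by
      have hc : ((K.toNat : ℕ) : ℝ) = (K:ℝ) := by exact_mod_cast Int.toNat_of_nonneg hK0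
      rw [hc]
      calc (K:ℝ)*δ ≤ (T*s/S)*δ := by nlinarith
        _ = T := by rw [hδdef]; field_simp
    have hsum := sum_sqrt_le hT hδ K.toNat hKn
    have hreidx : ∑ j ∈ Finset.range K.toNat, Real.sqrt (T^2 - (((j:ℝ)+1)*δ)^2) * δ
        = ∑ k ∈ Finset.Icc (1:ℤ) K, R k * δ := by
      apply Finset.sum_nbij' (i := fun j : ℕ => (j:ℤ)+1) (j := fun k : ℤ => (k-1).toNat)
      · intro a ha
        rw [Finset.mem_range] at ha
        rw [Finset.mem_Icc]
        omega
      · intro a ha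
        rw [Finset.mem_Icc] at ha
        rw [Finset.mem_range]
        omega
      · intro a _; omega
      · intro a ha
        rw [Finset.mem_Icc] at ha
        omega
      · intro a _
        rw [hR]
        push_cast
        ring_nf
    rw [hreidx, ← Finset.sum_mul] at hsum
    rw [le_div_iff₀ hδ]
    exact hsum
  have hERbound : ∑ k ∈ E, R k ≤ 2 * (π * T^2 / 4 / δ) := by
    rw [hEsplit2, Finset.sum_union hdisj, hneg]
    linarith
  -- final arithmetic
  have hcast : ((F.card : ℕ) : ℝ) ≤ T/s + (∑ k ∈ E, R k) / s + (E.card : ℝ) := by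
    rw [hsplit]
    have h1 : ∑ k ∈ E, (R k / s + 1) = (∑ k ∈ E, R k) / s + (E.card : ℝ) := by
      rw [Finset.sum_add_distrib, Finset.sum_div]
      simp [Finset.sum_const, nsmul_eq_mul]
    linarith
  have hfinal1 : (∑ k ∈ E, R k) / s ≤ π * T^2 / (2*S) := by
    have h2 : 2 * (π * T^2 / 4 / δ) / s = π * T^2 / (2*S) := by
      rw [hδdef]
      field_simp
      ring
    rw [← h2]
    gcongr
  have hfinal2 : ((E.card : ℕ) : ℝ) ≤ 2*s*T/S := by
    have : 2 * (T*s/S) = 2*s*T/S := by ring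
    linarith [hcardE]
  linarith [hcast, hfinal1, hfinal2]
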